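/- For every l ≥ 0, the space of ℝ²-valued polynomial vector fields of total degree ≤ l on ℝ² decomposes as a direct sum 𝒢^l ⊕ 𝒢^{c,l}, where 𝒢^l = { ∇p : p polynomial of degree ≤ l+1 } and 𝒢^{c,l} = { x^⊥ q : q polynomial of degree ≤ l−1 }, with x^⊥ = (−x₂, x₁) (and 𝒢^{c,l} = {0} when l = 0). -/

import Mathlib

open MvPolynomial

lemma degSum (d : Fin 2 →₀ ℕ) : (d.sum fun _ e => e) = d 0 + d 1 := by
  rw [Finsupp.sum_fintype _ _ (fun _ => rfl), Fin.sum_univ_two]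

lemma zero_of_degSum {e : Fin 2 →₀ ℕ} (h : e 0 + e 1 = 0) : e = 0 := by
  ext i; fin_cases i <;> simp <;> omega

lemma X_mul_pderiv_monomial (i : Fin 2) (d : Fin 2 →₀ ℕ) (a : ℝ) :
    X i * pderiv i (monomial d a) = monomial d ((d i : ℝ) * a) := by
  rw [pderiv_monomial, X, monomial_mul]
  by_cases h : d i = 0
  · simp [h]
  · rw [add_tsub_cancel_of_le (by rwa [Finsupp.single_le_iff, Nat.one_le_iff_ne_zero])]
    ring_nf

lemma euler_monomial (d : Fin 2 →₀ ℕ) (a : ℝ) :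
    X 0 * pderiv 0 (monomial d a) + X 1 * pderiv 1 (monomial d a)
      = monomial d (((d 0 : ℝ) + d 1) * a) := by
  rw [X_mul_pderiv_monomial, X_mul_pderiv_monomial, ← map_add, ← add_mul]

lemma euler_coeff (p : MvPolynomial (Fin 2) ℝ) (e : Fin 2 →₀ ℕ) :
    coeff e (X 0 * pderiv 0 p + X 1 * pderiv 1 p) = ((e 0 : ℝ) + e 1) * coeff e p := by
  conv_lhs => rw [p.as_sum]
  rw [map_sum, map_sum, Finset.mul_sum, Finset.mul_sum, ← Finset.sum_add_distrib]
  simp only [euler_monomial]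
  rw [coeff_sum]
  simp only [coeff_monomial]
  rw [Finset.sum_ite_eq' p.support e fun d => ((d 0 : ℝ) + d 1) * coeff d p]
  by_cases h : e ∈ p.support
  · rw [if_pos h]
  · rw [if_neg h, MvPolynomial.notMem_support_iff.mp h, mul_zero]

lemma euler_kernel {p : MvPolynomial (Fin 2) ℝ}
    (h : X 0 * pderiv 0 p + X 1 * pderiv 1 p = 0) (i : Fin 2) : pderiv i p = 0 := by
  have hp : p = C (coeff 0 p) := by
    ext e
    by_cases he : e = 0
    · subst he; simp
    · rw [coeff_C, if_neg (Ne.symm he)]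
      have h2 := euler_coeff p e
      rw [h, coeff_zero] at h2
      have h3 : ((e 0 : ℝ) + e 1) ≠ 0 := by
        intro h4
        apply he; apply zero_of_degSum
        exact_mod_cast (by push_cast at h4 ⊢; linarith : ((e 0 + e 1 : ℕ) : ℝ) = 0)
      exact (mul_eq_zero.mp h2.symm).resolve_left h3
  rw [hp, pderiv_C]

/-- Construction of a potential. -/
lemma euler_surj (f : MvPolynomial (Fin 2) ℝ) (h0 : coeff 0 f = 0) :
    ∃ p : MvPolynomial (Fin 2) ℝ, p.totalDegree ≤ f.totalDegree ∧
      X 0 * pderiv 0 p + X 1 * pderiv 1 p = f := by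
  refine ⟨∑ d ∈ f.support, (((d 0 : ℝ) + d 1))⁻¹ • monomial d (coeff d f), ?_, ?_⟩
  · refine totalDegree_finsetSum_le fun d hd => ?_
    refine (totalDegree_smul_le _ _).trans ((totalDegree_monomial_le _ _).trans ?_)
    exact (degSum d).symm ▸ (degSum d ▸ le_totalDegree hd)
  · have hcp : ∀ e, coeff e (∑ d ∈ f.support, (((d 0 : ℝ) + d 1))⁻¹ • monomial d (coeff d f))
        = ((e 0 : ℝ) + e 1)⁻¹ * coeff e f := by
      intro e
      rw [coeff_sum]
      simp only [coeff_smul, coeff_monomial, smul_eq_mul, mul_ite, mul_zero]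
      rw [Finset.sum_ite_eq' f.support e fun d => ((d 0 : ℝ) + d 1)⁻¹ * coeff d f]
      by_cases h : e ∈ f.support
      · rw [if_pos h]
      · rw [if_neg h, MvPolynomial.notMem_support_iff.mp h, mul_zero]
    ext e
    rw [euler_coeff, hcp]
    by_cases he : e = 0
    · subst he; simp [h0]
    · have h3 : ((e 0 : ℝ) + e 1) ≠ 0 := by
        intro h4
        exact he (zero_of_degSum (by exact_mod_cast (by push_cast at h4 ⊢; linarith :
          ((e 0 + e 1 : ℕ) : ℝ) = 0)))
      rw [← mul_assoc, mul_inv_cancel₀ h3, one_mul]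

lemma pderiv_totalDegree {p : MvPolynomial (Fin 2) ℝ} {n : ℕ} (h : p.totalDegree ≤ n + 1)
    (i : Fin 2) : (pderiv i p).totalDegree ≤ n := by
  conv_lhs => rw [p.as_sum]
  rw [map_sum]
  refine totalDegree_finsetSum_le fun d hd => ?_
  rw [pderiv_monomial]
  by_cases hdi : d i = 0
  · simp [hdi]
  · refine (totalDegree_monomial_le _ _).trans ?_
    have h1 : d 0 + d 1 ≤ n + 1 := degSum d ▸ le_totalDegree hd |>.trans h
    rw [Finsupp.sum_fintype _ _ (fun _ => rfl), Fin.sum_univ_two]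
    simp only [Finsupp.tsub_apply, Finsupp.single_apply]
    fin_cases i <;> simp_all <;> omega

lemma perp_factor {w0 w1 : MvPolynomial (Fin 2) ℝ}
    (h : X 0 * w0 + X 1 * w1 = 0) :
    ∃ q : MvPolynomial (Fin 2) ℝ, w0 = -(X 1) * q ∧ w1 = X 0 * q := by
  have hdvd : (X 0 : MvPolynomial (Fin 2) ℝ) ∣ w1 := by
    conv_rhs => rw [w1.as_sum]
    refine Finset.dvd_sum fun d hd => ?_
    rw [X_dvd_monomial]
    by_cases hd0 : d 0 = 0
    · left
      have h2 := congrArg (coeff (Finsupp.single 1 1 + d)) h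
      rw [coeff_add, coeff_X_mul, coeff_zero, coeff_X_mul'] at h2
      classical
      rw [if_neg (by simp [Finsupp.mem_support_iff, hd0])] at h2
      rw [zero_add] at h2
      exact h2
    · right; exact hd0
  obtain ⟨q, hq⟩ := hdvd
  refine ⟨q, ?_, hq⟩
  have hX : (X 0 : MvPolynomial (Fin 2) ℝ) ≠ 0 := X_ne_zero 0
  apply mul_left_cancel₀ hX
  rw [hq] at h
  ring_nf
  ring_nf at h
  linear_combination h

lemma deg_of_X_mul {q w1 : MvPolynomial (Fin 2) ℝ} (hq : w1 = X 0 * q) (hqne : q ≠ 0) :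
    q.totalDegree + 1 ≤ w1.totalDegree := by
  obtain ⟨d, hd, hdeq⟩ := q.support.exists_mem_eq_sup
    (Finset.nonempty_iff_ne_empty.mpr (MvPolynomial.support_eq_empty.not.mpr hqne)) fun s => s.sum fun _ e => e
  have hmem : (Finsupp.single 0 1 + d) ∈ w1.support := by
    rw [MvPolynomial.mem_support_iff, hq, coeff_X_mul]
    exact MvPolynomial.mem_support_iff.mp hd
  have h1 := le_totalDegree hmem
  rw [degSum] at h1
  simp only [Finsupp.add_apply, Finsupp.single_apply] at h1
  rw [totalDegree, hdeq, degSum]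
  simp at h1
  omega


/-- ℝ²-valued polynomial vector fields with components of total degree ≤ l. -/
noncomputable def polyVec2 (l : ℕ) : Submodule ℝ (Fin 2 → MvPolynomial (Fin 2) ℝ) :=
  Submodule.pi Set.univ fun _ => MvPolynomial.restrictTotalDegree (Fin 2) ℝ l

/-- 𝒢^l = gradients of polynomials of degree ≤ l+1. -/
noncomputable def Gsp2 (l : ℕ) : Submodule ℝ (Fin 2 → MvPolynomial (Fin 2) ℝ) :=
  Submodule.span ℝ {v | ∃ p : MvPolynomial (Fin 2) ℝ,
    p.totalDegree ≤ l + 1 ∧ v = fun i => MvPolynomial.pderiv i p}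

/-- The rotated coordinate vector x^⊥ = (−x₂, x₁). -/
noncomputable def xperp2 : Fin 2 → MvPolynomial (Fin 2) ℝ := ![-(X 1), X 0]

/-- 𝒢^{c,l} = x^⊥ 𝒫^{l−1} (reduced to {0} when l = 0). -/
noncomputable def Gcsp2 (l : ℕ) : Submodule ℝ (Fin 2 → MvPolynomial (Fin 2) ℝ) :=
  Submodule.span ℝ {v | ∃ q : MvPolynomial (Fin 2) ℝ,
    q.totalDegree + 1 ≤ l ∧ v = fun i => xperp2 i * q}

lemma mem_Gsp2_exists {l : ℕ} {v : Fin 2 → MvPolynomial (Fin 2) ℝ} (hg : v ∈ Gsp2 l) :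
    ∃ p : MvPolynomial (Fin 2) ℝ, v = fun i => pderiv i p := by
  induction hg using Submodule.span_induction with
  | mem x hx => obtain ⟨p, _, rfl⟩ := hx; exact ⟨p, rfl⟩
  | zero => exact ⟨0, by funext i; simp⟩
  | add x y hx hy ihx ihy =>
    obtain ⟨p, rfl⟩ := ihx; obtain ⟨p', rfl⟩ := ihy
    exact ⟨p + p', by funext i; simp⟩
  | smul c x hx ihx =>
    obtain ⟨p, rfl⟩ := ihx
    exact ⟨c • p, by funext i; simp⟩

lemma mem_Gcsp2_exists {l : ℕ} {v : Fin 2 → MvPolynomial (Fin 2) ℝ} (hc : v ∈ Gcsp2 l) :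
    ∃ q : MvPolynomial (Fin 2) ℝ, v = fun i => xperp2 i * q := by
  induction hc using Submodule.span_induction with
  | mem x hx => obtain ⟨q, _, rfl⟩ := hx; exact ⟨q, rfl⟩
  | zero => exact ⟨0, by funext i; simp⟩
  | add x y hx hy ihx ihy =>
    obtain ⟨q, rfl⟩ := ihx; obtain ⟨q', rfl⟩ := ihy
    exact ⟨q + q', by funext i; simp [mul_add]⟩
  | smul c x hx ihx =>
    obtain ⟨q, rfl⟩ := ihx
    exact ⟨c • q, by funext i; simp [mul_smul_comm]⟩

theorem polyVec2_eq_grad_directSum_gradComplement (l : ℕ) :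
    Gsp2 l ⊔ Gcsp2 l = polyVec2 l ∧ Gsp2 l ⊓ Gcsp2 l = ⊥ := by
  constructor
  · apply le_antisymm
    · apply sup_le
      · rw [Gsp2, Submodule.span_le]
        rintro v ⟨p, hp, rfl⟩
        rw [SetLike.mem_coe, polyVec2, Submodule.mem_pi]
        intro i _
        rw [mem_restrictTotalDegree]
        exact pderiv_totalDegree hp i
      · rw [Gcsp2, Submodule.span_le]
        rintro v ⟨q, hq, rfl⟩
        rw [SetLike.mem_coe, polyVec2, Submodule.mem_pi]
        intro i _
        rw [mem_restrictTotalDegree]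
        fin_cases i <;>
          simp only [xperp2, Matrix.cons_val_zero, Matrix.cons_val_one, Matrix.head_cons,
            neg_mul] <;>
        · refine le_trans ?_ (by omega : 1 + q.totalDegree ≤ l)
          first
          | exact (totalDegree_neg _).le.trans
              ((totalDegree_mul _ _).trans (by simp [totalDegree_X]))
          | exact (totalDegree_mul _ _).trans (by simp [totalDegree_X])
    · intro v hv
      rw [polyVec2, Submodule.mem_pi] at hv
      simp only [Set.mem_univ, forall_true_left, mem_restrictTotalDegree] at hv
      set f : MvPolynomial (Fin 2) ℝ := X 0 * v 0 + X 1 * v 1 with hf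
      have h0 : coeff 0 f = 0 := by
        have h00 : constantCoeff f = 0 := by simp [hf]
        exact h00
      obtain ⟨p, hpd, hpe⟩ := euler_surj f h0
      have hpd' : p.totalDegree ≤ l + 1 := by
        refine hpd.trans ?_
        refine (totalDegree_add _ _).trans (max_le ?_ ?_) <;>
          refine (totalDegree_mul _ _).trans ?_
        · have := hv 0; rw [totalDegree_X]; omega
        · have := hv 1; rw [totalDegree_X]; omega
      have hw : X 0 * (v 0 - pderiv 0 p) + X 1 * (v 1 - pderiv 1 p) = 0 := by
        have := hpe
        rw [hf] at this
        linear_combination -this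
      obtain ⟨q, hq0, hq1⟩ := perp_factor hw
      have hv0 : v 0 = pderiv 0 p + xperp2 0 * q := by
        simp only [xperp2, Matrix.cons_val_zero]
        linear_combination hq0
      have hv1 : v 1 = pderiv 1 p + xperp2 1 * q := by
        simp only [xperp2, Matrix.cons_val_one, Matrix.head_cons, Matrix.cons_val_zero]
        linear_combination hq1
      have hveq : v = (fun i => pderiv i p) + (fun i => xperp2 i * q) := by
        funext i
        fin_cases i
        · exact hv0
        · exact hv1
      rw [hveq]
      refine Submodule.add_mem_sup ?_ ?_
      · exact Submodule.subset_span ⟨p, hpd', rfl⟩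
      · by_cases hqz : q = 0
        · subst hqz
          have : (fun i => xperp2 i * (0 : MvPolynomial (Fin 2) ℝ)) =
              (0 : Fin 2 → MvPolynomial (Fin 2) ℝ) := by funext i; simp
          rw [this]; exact Submodule.zero_mem _
        · refine Submodule.subset_span ⟨q, ?_, rfl⟩
          have hd1 : (v 1 - pderiv 1 p).totalDegree ≤ l :=
            (totalDegree_sub _ _).trans (max_le (hv 1) (pderiv_totalDegree hpd' 1))
          exact (deg_of_X_mul hq1 hqz).trans hd1
  · rw [eq_bot_iff]
    rintro v ⟨hg, hc⟩
    have hgp := mem_Gsp2_exists hg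
    have hcq := mem_Gcsp2_exists hc
    obtain ⟨p, hp⟩ := hgp
    obtain ⟨q, hq⟩ := hcq
    have he : X 0 * pderiv 0 p + X 1 * pderiv 1 p = 0 := by
      have h0 : pderiv 0 p = xperp2 0 * q := by rw [← congrFun hp 0, congrFun hq 0]
      have h1 : pderiv 1 p = xperp2 1 * q := by rw [← congrFun hp 1, congrFun hq 1]
      rw [h0, h1]
      simp only [xperp2, Matrix.cons_val_zero, Matrix.cons_val_one, Matrix.head_cons]
      ring
    rw [Submodule.mem_bot, hp]
    funext i
    exact euler_kernel he i
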